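/- Let μ, ν be probability measures on ℝ with finite first moment with μ ≤_cx ν, and let π̂^{HF} = λ_{(0,1)}(du) δ_{F_μ^{-1}(u)}(dx) δ_{F_ν^{-1}(u)}(dy) be the lifted Hoeffding–Fréchet coupling. Let M̂ = λ_{(0,1)}(du) δ_{F_μ^{-1}(u)}(dx) m_u(dy) be any lifted martingale coupling between μ and ν whose kernel satisfies ∫_ℝ |y − F_ν^{-1}(u)| m_u(dy) = |F_μ^{-1}(u) − F_ν^{-1}(u)| for du-almost all u ∈ (0,1). Then M̂ is a lifted martingale rearrangement coupling of π̂^{HF}, i.e. ÂW₁(π̂^{HF}, M̂) = inf over M̂' ∈ Π̂^M(μ,ν) of ÂW₁(π̂^{HF}, M̂'), and this common value equals ∫_{(0,1)} |F_μ^{-1}(u) − F_ν^{-1}(u)| du. -/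

import Mathlib

open MeasureTheory ProbabilityTheory Set Filter

noncomputable section

/-- Lebesgue measure restricted to `(0,1)`. -/
def lam01 : Measure ℝ := volume.restrict (Set.Ioo 0 1)

/-- Cumulative distribution function `F_η(x) = η((-∞, x])`. -/
def Fcdf (η : Measure ℝ) (x : ℝ) : ℝ := (η (Set.Iic x)).toReal

/-- Left limit of the cumulative distribution function, `F_η(x-) = η((-∞, x))`. -/
def FcdfL (η : Measure ℝ) (x : ℝ) : ℝ := (η (Set.Iio x)).toReal

/-- Quantile function `F_η^{-1}(u) = inf {x : F_η(x) ≥ u}`. -/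
def qf (η : Measure ℝ) (u : ℝ) : ℝ := sInf {x | u ≤ Fcdf η x}

/-- `π` is a coupling between `μ` and `ν`. -/
def IsCoupling (π : Measure (ℝ × ℝ)) (μ ν : Measure ℝ) : Prop :=
  π.map Prod.fst = μ ∧ π.map Prod.snd = ν

/-- `W_ρ^ρ(η, η')`, the Wasserstein distance of order `ρ` raised to the power `ρ`. -/
def Wr (ρ : ℝ) (η η' : Measure ℝ) : ℝ :=
  sInf {c | ∃ π : Measure (ℝ × ℝ), IsCoupling π η η' ∧ c = ∫ p, |p.1 - p.2| ^ ρ ∂π}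

/-- The Wasserstein distance of order `ρ`. -/
def W (ρ : ℝ) (η η' : Measure ℝ) : ℝ := Wr ρ η η' ^ (1 / ρ)

/-- The stochastic order `η ≤_st η'`: the quantile functions are ordered on `(0,1)`. -/
def StochOrder (η η' : Measure ℝ) : Prop := ∀ u ∈ Set.Ioo (0 : ℝ) 1, qf η u ≤ qf η' u

/-- The convex order `μ ≤_cx ν`: `∫ f dμ ≤ ∫ f dν` for every (integrable) convex `f`. -/
def ConvexOrder (μ ν : Measure ℝ) : Prop :=
  ∀ f : ℝ → ℝ, ConvexOn ℝ Set.univ f → Integrable f μ → Integrable f ν →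
    ∫ x, f x ∂μ ≤ ∫ x, f x ∂ν

/-- `AW_ρ^ρ(π, π')`, the adapted Wasserstein distance of order `ρ` raised to the power `ρ`:
the infimum over couplings `χ` between the first marginals of
`∫ (|x-x'|^ρ + W_ρ^ρ(π_x, π'_{x'})) dχ`, where `κ, κ'` are disintegration kernels of `π, π'`. -/
def AWr (ρ : ℝ) (π π' : Measure (ℝ × ℝ)) : ℝ :=
  sInf {c | ∃ (χ : Measure (ℝ × ℝ)) (κ κ' : Kernel ℝ ℝ),
      IsCoupling χ (π.map Prod.fst) (π'.map Prod.fst) ∧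
      π = (π.map Prod.fst).compProd κ ∧ π' = (π'.map Prod.fst).compProd κ' ∧
      c = ∫ q, (|q.1 - q.2| ^ ρ + Wr ρ (κ q.1) (κ' q.2)) ∂χ}

/-- The adapted Wasserstein distance of order `ρ`. -/
def AW (ρ : ℝ) (π π' : Measure (ℝ × ℝ)) : ℝ := AWr ρ π π' ^ (1 / ρ)

/-- The lifted adapted Wasserstein distance of order `ρ`, raised to the power `ρ`, between the
lifted couplings with first marginals `μ, μ'` and kernels `p, p'`. -/
def lAWr (ρ : ℝ) (μ : Measure ℝ) (p : ℝ → Measure ℝ) (μ' : Measure ℝ)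
    (p' : ℝ → Measure ℝ) : ℝ :=
  sInf {c | ∃ χ : Measure (ℝ × ℝ), IsCoupling χ lam01 lam01 ∧
      c = ∫ q, (|q.1 - q.2| ^ ρ + |qf μ q.1 - qf μ' q.2| ^ ρ + Wr ρ (p q.1) (p' q.2)) ∂χ}

/-- The probability kernel `p` encodes a lifted coupling
`λ_{(0,1)}(du) δ_{F_μ^{-1}(u)}(dx) p_u(dy)` between `μ` and `ν`. -/
def IsLiftedCoupling (μ ν : Measure ℝ) (p : ℝ → Measure ℝ) : Prop :=
  Measurable p ∧ (∀ u, IsProbabilityMeasure (p u)) ∧ lam01.bind p = ν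

/-- The probability kernel `m` encodes a lifted martingale coupling between `μ` and `ν`. -/
def IsLiftedMartingale (μ ν : Measure ℝ) (m : ℝ → Measure ℝ) : Prop :=
  IsLiftedCoupling μ ν m ∧ ∀ᵐ u ∂lam01, (∫ y, y ∂(m u)) = qf μ u

end


section Aux

open scoped ENNReal

instance : IsProbabilityMeasure lam01 := by
  constructor
  simp [lam01, Real.volume_Ioo]

variable {μ : Measure ℝ}

lemma Fcdf_eq_cdf [IsProbabilityMeasure μ] : Fcdf μ = ⇑(cdf μ) := by
  ext x
  rw [Fcdf, ProbabilityTheory.cdf_eq_real, measureReal_def]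

lemma Fcdf_nonneg (x : ℝ) : 0 ≤ Fcdf μ x := ENNReal.toReal_nonneg

lemma Fcdf_le_one [IsProbabilityMeasure μ] (x : ℝ) : Fcdf μ x ≤ 1 := by
  have h : μ (Set.Iic x) ≤ 1 := prob_le_one
  simpa [Fcdf] using ENNReal.toReal_mono ENNReal.one_ne_top h

lemma Fcdf_mono [IsProbabilityMeasure μ] : Monotone (Fcdf μ) := by
  rw [Fcdf_eq_cdf]; exact (cdf μ).mono

lemma qf_le_iff [IsProbabilityMeasure μ] {u : ℝ} (hu : u ∈ Set.Ioo (0:ℝ) 1) (x : ℝ) :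
    qf μ u ≤ x ↔ u ≤ Fcdf μ x := by
  have hF : Fcdf μ = ⇑(cdf μ) := Fcdf_eq_cdf
  have hmono : Monotone (Fcdf μ) := Fcdf_mono
  obtain ⟨z, hz⟩ : ∃ z, Fcdf μ z < u := by
    have h := (tendsto_cdf_atBot μ).eventually_lt_const hu.1
    rw [← hF] at h
    exact h.exists
  have hbdd : BddBelow {x | u ≤ Fcdf μ x} := by
    refine ⟨z, fun y hy => ?_⟩
    by_contra h
    push_neg at h
    exact absurd (le_trans hy (hmono h.le)) (not_le.2 hz)
  have hne : {x | u ≤ Fcdf μ x}.Nonempty := by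
    have h := (tendsto_cdf_atTop μ).eventually_const_lt hu.2
    rw [← hF] at h
    obtain ⟨y, hy⟩ := h.exists
    exact ⟨y, hy.le⟩
  constructor
  · intro h
    have hlt : ∀ y, x < y → u ≤ Fcdf μ y := by
      intro y hy
      have : sInf {x | u ≤ Fcdf μ x} < y := lt_of_le_of_lt h hy
      obtain ⟨s, hs, hsy⟩ := (csInf_lt_iff hbdd hne).1 this
      exact le_trans hs (hmono hsy.le)
    have hrc : Filter.Tendsto (Fcdf μ) (nhdsWithin x (Set.Ioi x)) (nhds (Fcdf μ x)) := by
      rw [hF]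
      exact ((cdf μ).right_continuous x).mono_left (nhdsWithin_mono _ Set.Ioi_subset_Ici_self)
    refine ge_of_tendsto hrc ?_
    filter_upwards [self_mem_nhdsWithin] with y hy
    exact hlt y hy
  · intro h
    exact csInf_le hbdd h

lemma qf_eq_zero_of_nonpos [IsProbabilityMeasure μ] {u : ℝ} (hu : u ≤ 0) : qf μ u = 0 := by
  have : {x | u ≤ Fcdf μ x} = Set.univ :=
    Set.eq_univ_of_forall fun y => le_trans hu (Fcdf_nonneg y)
  rw [qf, this]
  refine Real.sInf_of_not_bddBelow ?_
  rintro ⟨b, hb⟩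
  have := hb (Set.mem_univ (b - 1))
  linarith

lemma qf_eq_zero_of_one_lt [IsProbabilityMeasure μ] {u : ℝ} (hu : 1 < u) : qf μ u = 0 := by
  have : {x | u ≤ Fcdf μ x} = ∅ := by
    refine Set.eq_empty_of_forall_notMem fun y hy => ?_
    have := Fcdf_le_one (μ := μ) y
    have : u ≤ Fcdf μ y := hy
    linarith
  rw [qf, this, Real.sInf_empty]

lemma measurable_qf [IsProbabilityMeasure μ] : Measurable (qf μ) := by
  refine measurable_of_Iic fun x => ?_
  have hset : qf μ ⁻¹' Set.Iic x =
      ((Set.Iic 0 ∪ Set.Ioi 1) ∩ {_u : ℝ | (0:ℝ) ≤ x}) ∪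
      ({(1:ℝ)} ∩ {_u : ℝ | qf μ 1 ≤ x}) ∪
      (Set.Ioo 0 1 ∩ Set.Iic (Fcdf μ x)) := by
    ext u
    simp only [Set.mem_preimage, Set.mem_Iic, Set.mem_union, Set.mem_inter_iff, Set.mem_setOf_eq,
      Set.mem_Ioo, Set.mem_Ioi, Set.mem_singleton_iff, Set.mem_Iic]
    constructor
    · intro h
      rcases le_or_gt u 0 with h0 | h0
      · exact Or.inl (Or.inl ⟨Or.inl h0, by rwa [qf_eq_zero_of_nonpos h0] at h⟩)
      · rcases lt_trichotomy u 1 with h1 | h1 | h1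
        · exact Or.inr ⟨⟨h0, h1⟩, (qf_le_iff ⟨h0, h1⟩ x).1 h⟩
        · exact Or.inl (Or.inr ⟨h1, h1 ▸ h⟩)
        · exact Or.inl (Or.inl ⟨Or.inr h1, by rwa [qf_eq_zero_of_one_lt h1] at h⟩)
    · rintro ((⟨h0 | h1, hx⟩ | ⟨h1, hx⟩) | ⟨hu, hx⟩)
      · rwa [qf_eq_zero_of_nonpos h0]
      · rwa [qf_eq_zero_of_one_lt h1]
      · rwa [h1]
      · exact (qf_le_iff hu x).2 hx
  rw [hset]
  exact (((measurableSet_Iic.union measurableSet_Ioi).inter (MeasurableSet.const _)).union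
    ((measurableSet_singleton _).inter (MeasurableSet.const _))).union
    (measurableSet_Ioo.inter measurableSet_Iic)

lemma map_qf [IsProbabilityMeasure μ] : lam01.map (qf μ) = μ := by
  have hqm : Measurable (qf μ) := measurable_qf
  have : IsProbabilityMeasure (lam01.map (qf μ)) := Measure.isProbabilityMeasure_map hqm.aemeasurable
  refine Measure.ext_of_Iic _ _ fun x => ?_
  rw [Measure.map_apply hqm measurableSet_Iic, lam01,
    Measure.restrict_apply (hqm measurableSet_Iic)]
  have hF0 : 0 ≤ Fcdf μ x := Fcdf_nonneg x
  have hF1 : Fcdf μ x ≤ 1 := Fcdf_le_one x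
  have hpre : qf μ ⁻¹' Set.Iic x ∩ Set.Ioo 0 1 = Set.Ioo 0 1 ∩ Set.Iic (Fcdf μ x) := by
    ext u
    simp only [Set.mem_inter_iff, Set.mem_preimage, Set.mem_Iic, Set.mem_Ioo]
    constructor
    · rintro ⟨h, hu⟩
      exact ⟨hu, (qf_le_iff hu x).1 h⟩
    · rintro ⟨hu, h⟩
      exact ⟨(qf_le_iff hu x).2 h, hu⟩
  rw [hpre]
  have hμx : μ (Set.Iic x) = ENNReal.ofReal (Fcdf μ x) := by
    rw [Fcdf, ENNReal.ofReal_toReal (measure_ne_top μ _)]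
  rcases eq_or_lt_of_le hF1 with h1 | h1
  · have : Set.Ioo (0:ℝ) 1 ∩ Set.Iic (Fcdf μ x) = Set.Ioo 0 1 := by
      refine Set.inter_eq_left.2 fun u hu => ?_
      exact le_of_lt (h1 ▸ hu.2)
    rw [this, Real.volume_Ioo, hμx, ← h1]
    norm_num
  · have : Set.Ioo (0:ℝ) 1 ∩ Set.Iic (Fcdf μ x) = Set.Ioc 0 (Fcdf μ x) := by
      ext u
      simp only [Set.mem_inter_iff, Set.mem_Ioo, Set.mem_Ioc, Set.mem_Iic]
      exact ⟨fun ⟨⟨a, _⟩, c⟩ => ⟨a, c⟩, fun ⟨a, c⟩ => ⟨⟨a, lt_of_le_of_lt c h1⟩, c⟩⟩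
    rw [this, Real.volume_Ioc, hμx, sub_zero]

lemma integrable_qf [IsProbabilityMeasure μ] (hμ1 : Integrable (fun x => |x|) μ) :
    Integrable (qf μ) lam01 := by
  have hid : Integrable (fun x : ℝ => x) μ := by
    have := (integrable_norm_iff (aestronglyMeasurable_id (μ := μ))).1
      (by simpa [Real.norm_eq_abs] using hμ1)
    exact this
  rw [← map_qf (μ := μ)] at hid
  have := (integrable_map_measure measurable_id.aestronglyMeasurable
    (measurable_qf (μ := μ)).aemeasurable).1 hid
  simpa [Function.comp] using this

lemma Wr_nonneg (ρ : ℝ) (η η' : Measure ℝ) : 0 ≤ Wr ρ η η' := by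
  refine Real.sInf_nonneg fun c hc => ?_
  obtain ⟨π, _, rfl⟩ := hc
  exact integral_nonneg fun p => Real.rpow_nonneg (abs_nonneg _) ρ

lemma cost_eq_of_coupling_dirac {a : ℝ} {η : Measure ℝ} {π : Measure (ℝ × ℝ)}
    (h : IsCoupling π (Measure.dirac a) η) :
    ∫ p, |p.1 - p.2| ^ (1:ℝ) ∂π = ∫ y, |a - y| ∂η := by
  obtain ⟨hfst, hsnd⟩ := h
  have hae : ∀ᵐ p : ℝ × ℝ ∂π, p.1 = a := by
    have hnull : π (Prod.fst ⁻¹' {a}ᶜ) = 0 := by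
      rw [← Measure.map_apply measurable_fst (measurableSet_singleton a).compl, hfst]
      simp
    have : ∀ᵐ p : ℝ × ℝ ∂π, ¬ (p.1 ∈ ({a}ᶜ : Set ℝ)) := ae_iff.2 (measure_mono_null (fun p hp => by simpa using hp) hnull)
    filter_upwards [this] with p hp
    simpa using hp
  calc ∫ p, |p.1 - p.2| ^ (1:ℝ) ∂π = ∫ p : ℝ × ℝ, |a - p.2| ∂π := by
        refine integral_congr_ae ?_
        filter_upwards [hae] with p hp
        rw [Real.rpow_one, hp]
    _ = ∫ y, |a - y| ∂(π.map Prod.snd) := by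
        rw [integral_map measurable_snd.aemeasurable]
        exact (continuous_const.sub continuous_id).abs.aestronglyMeasurable
    _ = ∫ y, |a - y| ∂η := by rw [hsnd]

lemma Wr_dirac_eq (a : ℝ) (η : Measure ℝ) [IsProbabilityMeasure η] :
    Wr 1 (Measure.dirac a) η = ∫ y, |a - y| ∂η := by
  have hset : {c | ∃ π : Measure (ℝ × ℝ), IsCoupling π (Measure.dirac a) η ∧
      c = ∫ p, |p.1 - p.2| ^ (1:ℝ) ∂π} = {∫ y, |a - y| ∂η} := by
    apply Set.Subset.antisymm
    · rintro c ⟨π, hπ, rfl⟩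
      exact cost_eq_of_coupling_dirac hπ
    · rintro c hc
      rw [Set.mem_singleton_iff] at hc
      refine ⟨(Measure.dirac a).prod η, ⟨?_, ?_⟩, ?_⟩
      · simp
      · simp
      · rw [hc]
        exact (cost_eq_of_coupling_dirac (a := a) (η := η) ⟨by simp, by simp⟩).symm
  rw [Wr, hset, csInf_singleton]

lemma integrable_id_lam01 : Integrable (fun u : ℝ => u) lam01 := by
  refine Integrable.mono' (integrable_const 1) aestronglyMeasurable_id ?_
  have h : ∀ᵐ u ∂lam01, u ∈ Set.Ioo (0:ℝ) 1 := ae_restrict_mem measurableSet_Ioo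
  filter_upwards [h] with u hu
  rw [Real.norm_eq_abs, abs_of_pos hu.1]
  exact hu.2.le

lemma integrable_comp_fst {χ : Measure (ℝ × ℝ)} (hfst : χ.map Prod.fst = lam01)
    {f : ℝ → ℝ} (hf : Measurable f) (hint : Integrable f lam01) :
    Integrable (fun q : ℝ × ℝ => f q.1) χ := by
  rw [← hfst] at hint
  have := (integrable_map_measure hf.aestronglyMeasurable measurable_fst.aemeasurable).1 hint
  exact this

lemma integrable_comp_snd {χ : Measure (ℝ × ℝ)} (hsnd : χ.map Prod.snd = lam01)
    {f : ℝ → ℝ} (hf : Measurable f) (hint : Integrable f lam01) :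
    Integrable (fun q : ℝ × ℝ => f q.2) χ := by
  rw [← hsnd] at hint
  have := (integrable_map_measure hf.aestronglyMeasurable measurable_snd.aemeasurable).1 hint
  exact this

lemma sm_f3 {ν : Measure ℝ} [IsProbabilityMeasure ν] (m' : ℝ → Measure ℝ)
    (hmeas : Measurable m') (hprob : ∀ u, IsProbabilityMeasure (m' u)) :
    StronglyMeasurable (fun q : ℝ × ℝ => ∫ y, |qf ν q.1 - y| ∂(m' q.2)) := by
  let κ : Kernel (ℝ × ℝ) ℝ := ⟨fun q => m' q.2, hmeas.comp measurable_snd⟩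
  haveI : IsMarkovKernel κ := ⟨fun q => hprob q.2⟩
  have hf : StronglyMeasurable
      (Function.uncurry fun (q : ℝ × ℝ) (y : ℝ) => |qf ν q.1 - y|) := by
    apply Measurable.stronglyMeasurable
    exact ((measurable_qf.comp (measurable_fst.comp measurable_fst)).comp measurable_id |>.sub
      measurable_snd).abs
  exact hf.integral_kernel_prod_right (κ := κ)

lemma measurable_L (m' : ℝ → Measure ℝ) (hmeas : Measurable m')
    (hprob : ∀ u, IsProbabilityMeasure (m' u)) :
    Measurable (fun u : ℝ => ∫⁻ y, ENNReal.ofReal |y| ∂(m' u)) := by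
  have hu : Measurable (Function.uncurry fun (_ : ℝ) (y : ℝ) => ENNReal.ofReal |y|) :=
    (measurable_abs.comp measurable_snd).ennreal_ofReal
  let κ : Kernel ℝ ℝ := ⟨m', hmeas⟩
  haveI : IsMarkovKernel κ := ⟨fun u => hprob u⟩
  exact Measurable.lintegral_kernel_prod_right (κ := κ) hu

lemma lintegral_L_lt_top {ν : Measure ℝ} (m' : ℝ → Measure ℝ) (hmeas : Measurable m')
    (hbind : lam01.bind m' = ν) (hν1 : Integrable (fun x => |x|) ν) :
    ∫⁻ u, ∫⁻ y, ENNReal.ofReal |y| ∂(m' u) ∂lam01 < ⊤ := by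
  rw [← Measure.lintegral_bind hmeas.aemeasurable ((measurable_abs).ennreal_ofReal.aemeasurable), hbind]
  have h := hν1.2
  rw [hasFiniteIntegral_iff_norm] at h
  simpa [Real.norm_eq_abs, abs_abs] using h

lemma lower_bound {μ ν : Measure ℝ} [IsProbabilityMeasure μ] [IsProbabilityMeasure ν]
    (hμ1 : Integrable (fun x => |x|) μ) (hν1 : Integrable (fun x => |x|) ν)
    (m' : ℝ → Measure ℝ) (hm' : IsLiftedMartingale μ ν m')
    {χ : Measure (ℝ × ℝ)} (hχ : IsCoupling χ lam01 lam01) :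
    (∫ u in Set.Ioo (0:ℝ) 1, |qf μ u - qf ν u|) ≤
      ∫ q : ℝ × ℝ, (|q.1 - q.2| ^ (1:ℝ) + |qf μ q.1 - qf μ q.2| ^ (1:ℝ) +
        Wr 1 (Measure.dirac (qf ν q.1)) (m' q.2)) ∂χ := by
  obtain ⟨⟨hmeas, hprob, hbind⟩, hmart⟩ := hm'
  obtain ⟨hfst, hsnd⟩ := hχ
  haveI : ∀ u, IsProbabilityMeasure (m' u) := hprob
  -- rewrite the integrand
  have hFeq : ∫ q : ℝ × ℝ, (|q.1 - q.2| ^ (1:ℝ) + |qf μ q.1 - qf μ q.2| ^ (1:ℝ) +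
        Wr 1 (Measure.dirac (qf ν q.1)) (m' q.2)) ∂χ =
      ∫ q : ℝ × ℝ, (|q.1 - q.2| + |qf μ q.1 - qf μ q.2| +
        ∫ y, |qf ν q.1 - y| ∂(m' q.2)) ∂χ := by
    refine integral_congr_ae (Filter.Eventually.of_forall fun q => ?_)
    simp only [Real.rpow_one, Wr_dirac_eq]
  rw [hFeq]
  -- integrability of the pieces
  have hqμm : Measurable (qf μ) := measurable_qf
  have hqνm : Measurable (qf ν) := measurable_qf
  have hi1 : Integrable (fun q : ℝ × ℝ => q.1) χ :=
    integrable_comp_fst hfst measurable_id integrable_id_lam01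
  have hi2 : Integrable (fun q : ℝ × ℝ => q.2) χ :=
    integrable_comp_snd hsnd measurable_id integrable_id_lam01
  have hqμ1 : Integrable (fun q : ℝ × ℝ => qf μ q.1) χ :=
    integrable_comp_fst hfst hqμm (integrable_qf hμ1)
  have hqμ2 : Integrable (fun q : ℝ × ℝ => qf μ q.2) χ :=
    integrable_comp_snd hsnd hqμm (integrable_qf hμ1)
  have hqν1 : Integrable (fun q : ℝ × ℝ => qf ν q.1) χ :=
    integrable_comp_fst hfst hqνm (integrable_qf hν1)
  have hHmeas : Measurable (fun u : ℝ => (∫⁻ y, ENNReal.ofReal |y| ∂(m' u)).toReal) :=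
    (measurable_L m' hmeas hprob).ennreal_toReal
  have hHint : Integrable (fun u : ℝ => (∫⁻ y, ENNReal.ofReal |y| ∂(m' u)).toReal) lam01 := by
    refine ⟨hHmeas.aestronglyMeasurable, ?_⟩
    rw [hasFiniteIntegral_iff_norm]
    refine lt_of_le_of_lt (lintegral_mono fun u => ?_)
      (lintegral_L_lt_top m' hmeas hbind hν1)
    rw [Real.norm_eq_abs, abs_of_nonneg ENNReal.toReal_nonneg]
    exact ENNReal.ofReal_toReal_le
  have hH2 : Integrable (fun q : ℝ × ℝ => (∫⁻ y, ENNReal.ofReal |y| ∂(m' q.2)).toReal) χ :=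
    integrable_comp_snd hsnd hHmeas hHint
  -- integrability of the conditional first-moment term
  have hf3sm := sm_f3 (ν := ν) m' hmeas hprob
  have hf3bd : ∀ q : ℝ × ℝ, ‖∫ y, |qf ν q.1 - y| ∂(m' q.2)‖ ≤
      |qf ν q.1| + (∫⁻ y, ENNReal.ofReal |y| ∂(m' q.2)).toReal := by
    intro q
    have h0 : 0 ≤ ∫ y, |qf ν q.1 - y| ∂(m' q.2) := integral_nonneg fun y => abs_nonneg _
    rw [Real.norm_eq_abs, abs_of_nonneg h0]
    by_cases hI : Integrable (fun y : ℝ => y) (m' q.2)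
    · have habs : Integrable (fun y => |qf ν q.1 - y|) (m' q.2) :=
        ((integrable_const _).sub hI).abs
      have hb : Integrable (fun y => |qf ν q.1| + |y|) (m' q.2) :=
        (integrable_const _).add hI.abs
      have hH : ∫ y, |y| ∂(m' q.2) = (∫⁻ y, ENNReal.ofReal |y| ∂(m' q.2)).toReal := by
        rw [integral_eq_lintegral_of_nonneg_ae (Filter.Eventually.of_forall fun y => abs_nonneg y)
          measurable_abs.aestronglyMeasurable]
      calc ∫ y, |qf ν q.1 - y| ∂(m' q.2) ≤ ∫ y, (|qf ν q.1| + |y|) ∂(m' q.2) :=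
            integral_mono habs hb fun y => abs_sub _ y
        _ = |qf ν q.1| + ∫ y, |y| ∂(m' q.2) := by
            rw [integral_add (integrable_const _) hI.abs, integral_const]
            simp
        _ = |qf ν q.1| + (∫⁻ y, ENNReal.ofReal |y| ∂(m' q.2)).toReal := by rw [hH]
    · have hni : ¬ Integrable (fun y => |qf ν q.1 - y|) (m' q.2) := by
        intro h
        apply hI
        have h1 : Integrable (fun y => qf ν q.1 - y) (m' q.2) := by
          have := (integrable_norm_iff
            ((continuous_const.sub continuous_id).aestronglyMeasurable)).1
            (h.congr (Filter.Eventually.of_forall fun y => (Real.norm_eq_abs _).symm))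
          exact this
        have := (integrable_const (qf ν q.1)).sub h1
        simpa [Pi.sub_def, sub_sub_cancel] using this
      rw [integral_undef hni]
      positivity
  have hf3int : Integrable (fun q : ℝ × ℝ => ∫ y, |qf ν q.1 - y| ∂(m' q.2)) χ :=
    Integrable.mono' (hqν1.abs.add hH2) hf3sm.aestronglyMeasurable
      (Filter.Eventually.of_forall hf3bd)
  have hFint : Integrable (fun q : ℝ × ℝ => |q.1 - q.2| + |qf μ q.1 - qf μ q.2| +
      ∫ y, |qf ν q.1 - y| ∂(m' q.2)) χ :=
    (((hi1.sub hi2).abs).add ((hqμ1.sub hqμ2).abs)).add hf3int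
  have hgint : Integrable (fun q : ℝ × ℝ => |qf μ q.1 - qf ν q.1|) χ := (hqμ1.sub hqν1).abs
  -- the a.e. properties of the kernel, transferred to χ through the second marginal
  have haeu : ∀ᵐ u ∂lam01, (∫ y, y ∂(m' u)) = qf μ u ∧ Integrable (fun y : ℝ => y) (m' u) := by
    refine hmart.and ?_
    have hae := ae_lt_top (measurable_L m' hmeas hprob) (lintegral_L_lt_top m' hmeas hbind hν1).ne
    filter_upwards [hae] with u hu
    refine ⟨aestronglyMeasurable_id, ?_⟩
    rw [hasFiniteIntegral_iff_norm]
    simpa [Real.norm_eq_abs] using hu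
  have hae2 : ∀ᵐ q : ℝ × ℝ ∂χ, (∫ y, y ∂(m' q.2)) = qf μ q.2 ∧
      Integrable (fun y : ℝ => y) (m' q.2) := by
    rw [← hsnd] at haeu
    exact ae_of_ae_map measurable_snd.aemeasurable haeu
  -- put the left-hand side in terms of χ
  have hlhs : (∫ u in Set.Ioo (0:ℝ) 1, |qf μ u - qf ν u|) =
      ∫ q : ℝ × ℝ, |qf μ q.1 - qf ν q.1| ∂χ := by
    have h1 : (∫ u in Set.Ioo (0:ℝ) 1, |qf μ u - qf ν u|) =
        ∫ u, |qf μ u - qf ν u| ∂lam01 := rfl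
    rw [h1, ← hfst, integral_map (f := fun u => |qf μ u - qf ν u|) measurable_fst.aemeasurable
      ((hqμm.sub hqνm).abs.aestronglyMeasurable)]
  rw [hlhs]
  refine integral_mono_ae hgint hFint ?_
  filter_upwards [hae2] with q hq
  obtain ⟨hmean, hint⟩ := hq
  have hsub : ∫ y, (qf ν q.1 - y) ∂(m' q.2) = qf ν q.1 - qf μ q.2 := by
    rw [integral_sub (integrable_const _) hint, integral_const, hmean]
    simp
  have h3 : |qf ν q.1 - qf μ q.2| ≤ ∫ y, |qf ν q.1 - y| ∂(m' q.2) := by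
    rw [← hsub]
    simpa [Real.norm_eq_abs] using
      norm_integral_le_integral_norm (μ := m' q.2) (fun y => qf ν q.1 - y)
  have tri : |qf μ q.1 - qf ν q.1| ≤ |qf μ q.1 - qf μ q.2| + |qf μ q.2 - qf ν q.1| :=
    abs_sub_le _ _ _
  have hcomm : |qf μ q.2 - qf ν q.1| = |qf ν q.1 - qf μ q.2| := abs_sub_comm _ _
  have h1 : (0:ℝ) ≤ |q.1 - q.2| := abs_nonneg _
  show |qf μ q.1 - qf ν q.1| ≤
    |q.1 - q.2| + |qf μ q.1 - qf μ q.2| + ∫ y, |qf ν q.1 - y| ∂(m' q.2)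
  linarith

lemma diag_coupling : IsCoupling (lam01.map (fun u : ℝ => (u, u))) lam01 lam01 := by
  have hd : Measurable fun u : ℝ => (u, u) := measurable_id.prodMk measurable_id
  constructor
  · rw [Measure.map_map measurable_fst hd]; exact Measure.map_id
  · rw [Measure.map_map measurable_snd hd]; exact Measure.map_id

lemma diag_cost {μ ν : Measure ℝ} [IsProbabilityMeasure μ] [IsProbabilityMeasure ν]
    (m' : ℝ → Measure ℝ) (hmeas : Measurable m') (hprob : ∀ u, IsProbabilityMeasure (m' u)) :
    ∫ q : ℝ × ℝ, (|q.1 - q.2| ^ (1:ℝ) + |qf μ q.1 - qf μ q.2| ^ (1:ℝ) +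
        Wr 1 (Measure.dirac (qf ν q.1)) (m' q.2)) ∂(lam01.map (fun u : ℝ => (u, u))) =
      ∫ u, (∫ y, |qf ν u - y| ∂(m' u)) ∂lam01 := by
  haveI : ∀ u, IsProbabilityMeasure (m' u) := hprob
  have hd : Measurable fun u : ℝ => (u, u) := measurable_id.prodMk measurable_id
  have hqμm : Measurable (qf μ) := measurable_qf
  have hFeq : ∫ q : ℝ × ℝ, (|q.1 - q.2| ^ (1:ℝ) + |qf μ q.1 - qf μ q.2| ^ (1:ℝ) +
        Wr 1 (Measure.dirac (qf ν q.1)) (m' q.2)) ∂(lam01.map (fun u : ℝ => (u, u))) =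
      ∫ q : ℝ × ℝ, (|q.1 - q.2| + |qf μ q.1 - qf μ q.2| +
        ∫ y, |qf ν q.1 - y| ∂(m' q.2)) ∂(lam01.map (fun u : ℝ => (u, u))) := by
    refine integral_congr_ae (Filter.Eventually.of_forall fun q => ?_)
    simp only [Real.rpow_one, Wr_dirac_eq]
  have hFm : Measurable (fun q : ℝ × ℝ => |q.1 - q.2| + |qf μ q.1 - qf μ q.2| +
      ∫ y, |qf ν q.1 - y| ∂(m' q.2)) :=
    ((measurable_fst.sub measurable_snd).abs.add
      ((hqμm.comp measurable_fst).sub (hqμm.comp measurable_snd)).abs).add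
      (sm_f3 m' hmeas hprob).measurable
  rw [hFeq, integral_map hd.aemeasurable hFm.aestronglyMeasurable]
  refine integral_congr_ae (Filter.Eventually.of_forall fun u => ?_)
  simp

lemma lAWr_bddBelow {μ ν : Measure ℝ} (p p' : ℝ → Measure ℝ) :
    ∀ c ∈ {c | ∃ χ : Measure (ℝ × ℝ), IsCoupling χ lam01 lam01 ∧
      c = ∫ q, (|q.1 - q.2| ^ (1:ℝ) + |qf μ q.1 - qf ν q.2| ^ (1:ℝ) +
        Wr 1 (p q.1) (p' q.2)) ∂χ}, 0 ≤ c := by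
  rintro c ⟨χ, _, rfl⟩
  refine integral_nonneg fun q => ?_
  have := Wr_nonneg 1 (p q.1) (p' q.2)
  have h1 : (0:ℝ) ≤ |q.1 - q.2| ^ (1:ℝ) := Real.rpow_nonneg (abs_nonneg _) _
  have h2 : (0:ℝ) ≤ |qf μ q.1 - qf ν q.2| ^ (1:ℝ) := Real.rpow_nonneg (abs_nonneg _) _
  show (0:ℝ) ≤ |q.1 - q.2| ^ (1:ℝ) + |qf μ q.1 - qf ν q.2| ^ (1:ℝ) + Wr 1 (p q.1) (p' q.2)
  linarith

set_option maxHeartbeats 1000000 in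
lemma lAWr_le_diag {μ ν : Measure ℝ} [IsProbabilityMeasure μ] [IsProbabilityMeasure ν]
    (m' : ℝ → Measure ℝ) (hmeas : Measurable m') (hprob : ∀ u, IsProbabilityMeasure (m' u)) :
    lAWr 1 μ (fun u => Measure.dirac (qf ν u)) μ m' ≤
      ∫ u, (∫ y, |qf ν u - y| ∂(m' u)) ∂lam01 := by
  unfold lAWr
  refine csInf_le ⟨0, fun c hc => lAWr_bddBelow (μ := μ) (ν := μ) (fun u => Measure.dirac (qf ν u)) m' c hc⟩ ?_
  exact ⟨lam01.map (fun u : ℝ => (u, u)), diag_coupling, (diag_cost m' hmeas hprob).symm⟩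

set_option maxHeartbeats 1000000 in
lemma le_lAWr {μ ν : Measure ℝ} [IsProbabilityMeasure μ] [IsProbabilityMeasure ν]
    (hμ1 : Integrable (fun x => |x|) μ) (hν1 : Integrable (fun x => |x|) ν)
    (m' : ℝ → Measure ℝ) (hm' : IsLiftedMartingale μ ν m') :
    (∫ u in Set.Ioo (0:ℝ) 1, |qf μ u - qf ν u|) ≤
      lAWr 1 μ (fun u => Measure.dirac (qf ν u)) μ m' := by
  unfold lAWr
  refine le_csInf ⟨_, lam01.map (fun u : ℝ => (u, u)), diag_coupling,
    (diag_cost m' hm'.1.1 hm'.1.2.1).symm⟩ ?_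
  rintro c ⟨χ, hχ, rfl⟩
  exact lower_bound hμ1 hν1 m' hm' hχ

end Aux

/-- Proposition `HFmartrearrangementlifted`: for `μ ≤_cx ν`, any lifted
martingale coupling with kernel `m` satisfying `∫ |y - F_ν^{-1}(u)| m_u(dy) = |F_μ^{-1}(u) -
F_ν^{-1}(u)|` a.e. is a lifted martingale rearrangement coupling of the lifted Hoeffding–Fréchet
coupling (with kernel `u ↦ δ_{F_ν^{-1}(u)}`), and the optimal value is
`∫_{(0,1)} |F_μ^{-1}(u) - F_ν^{-1}(u)| du`. -/
theorem stmt9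
    (μ ν : Measure ℝ) [IsProbabilityMeasure μ] [IsProbabilityMeasure ν]
    (hμ1 : Integrable (fun x => |x|) μ) (hν1 : Integrable (fun x => |x|) ν)
    (hcx : ConvexOrder μ ν)
    (m : ℝ → Measure ℝ) (hm : IsLiftedMartingale μ ν m)
    (hval : ∀ᵐ u ∂lam01, (∫ y, |y - qf ν u| ∂(m u)) = |qf μ u - qf ν u|) :
    (∀ m' : ℝ → Measure ℝ, IsLiftedMartingale μ ν m' →
      lAWr 1 μ (fun u => Measure.dirac (qf ν u)) μ m ≤
        lAWr 1 μ (fun u => Measure.dirac (qf ν u)) μ m') ∧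
    lAWr 1 μ (fun u => Measure.dirac (qf ν u)) μ m =
      ∫ u in Set.Ioo (0 : ℝ) 1, |qf μ u - qf ν u| := by
  have hcompute : ∫ u, (∫ y, |qf ν u - y| ∂(m u)) ∂lam01 =
      ∫ u in Set.Ioo (0:ℝ) 1, |qf μ u - qf ν u| := by
    have h1 : ∫ u, (∫ y, |qf ν u - y| ∂(m u)) ∂lam01 = ∫ u, |qf μ u - qf ν u| ∂lam01 := by
      refine integral_congr_ae ?_
      filter_upwards [hval] with u h
      have h2 : ∫ y, |qf ν u - y| ∂(m u) = ∫ y, |y - qf ν u| ∂(m u) :=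
        integral_congr_ae (Filter.Eventually.of_forall fun y => abs_sub_comm _ _)
      rw [h2, h]
    exact h1
  have hupper := (lAWr_le_diag (μ := μ) (ν := ν) m hm.1.1 hm.1.2.1).trans (le_of_eq hcompute)
  have hlower := le_lAWr hμ1 hν1 m hm
  have heq : lAWr 1 μ (fun u => Measure.dirac (qf ν u)) μ m =
      ∫ u in Set.Ioo (0:ℝ) 1, |qf μ u - qf ν u| := le_antisymm hupper hlower
  refine ⟨fun m' hm' => ?_, heq⟩
  rw [heq]
  exact le_lAWr hμ1 hν1 m' hm'
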